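/- Let U be a strongly self-centralizing subalgebra of a finite-dimensional Lie algebra L, i.e., C_L(x) = U for every nonzero x ∈ U. Then nil_L(x) = U for every nonzero x ∈ U, and consequently the nilpotent graph Γ_N(L) is disconnected (no vertex of U \ {0} is adjacent to any vertex outside U). -/

import Mathlib

/-- The nilpotentizer of a Lie algebra `L`: the set of elements `x` such that the Lie
subalgebra generated by `x` and `y` is nilpotent for every `y ∈ L`. -/
def nilSet (F : Type*) [Field F] (L : Type*) [LieRing L] [LieAlgebra F L] : Set L :=
  {x : L | ∀ y : L, LieRing.IsNilpotent (LieSubalgebra.lieSpan F L {x, y})}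

/-- The nilpotentizer of an element `h` of a Lie algebra `L`: the set of `x ∈ L` such
that the Lie subalgebra generated by `h` and `x` is nilpotent. -/
def nilIn (F : Type*) [Field F] (L : Type*) [LieRing L] [LieAlgebra F L] (h : L) : Set L :=
  {x : L | LieRing.IsNilpotent (LieSubalgebra.lieSpan F L {h, x})}

/-- The nilpotent graph of a Lie algebra `L`: vertices are the elements of
`L` not in `nilSet F L`, and two distinct vertices are adjacent iff the Lie
subalgebra they generate is nilpotent. -/
def nilGraph (F : Type*) [Field F] (L : Type*) [LieRing L] [LieAlgebra F L] :
    SimpleGraph {x : L // x ∉ nilSet F L} where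
  Adj x y := x ≠ y ∧
    LieRing.IsNilpotent (LieSubalgebra.lieSpan F L {(x : L), (y : L)})
  symm := ⟨by
    rintro x y ⟨h1, h2⟩
    exact ⟨h1.symm, by rwa [Set.pair_comm]⟩⟩
  loopless := ⟨by rintro x ⟨h1, -⟩; exact h1 rfl⟩

/-- A Lie subalgebra whose elements pairwise commute is nilpotent. -/
lemma SSC.abelian_nilp (F : Type*) [Field F] (L : Type*) [LieRing L] [LieAlgebra F L]
    (N : LieSubalgebra F L) (h : ∀ a ∈ N, ∀ b ∈ N, ⁅a, b⁆ = (0:L)) :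
    LieRing.IsNilpotent N := by
  have : LieModule.IsTrivial N N := ⟨fun a b => Subtype.ext (by simpa using h a a.2 b b.2)⟩
  infer_instance

/-- `0` always lies in the nilpotentizer. -/
lemma SSC.zero_mem_nilSet (F : Type*) [Field F] (L : Type*) [LieRing L] [LieAlgebra F L] :
    (0 : L) ∈ nilSet F L := by
  intro y
  set K : LieSubalgebra F L :=
    { Submodule.span F {y} with
      lie_mem' := by
        intro a b ha hb
        obtain ⟨s, rfl⟩ := Submodule.mem_span_singleton.mp ha
        obtain ⟨t, rfl⟩ := Submodule.mem_span_singleton.mp hb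
        show ⁅s • y, t • y⁆ ∈ Submodule.span F {y}
        simp } with hK
  have hle : LieSubalgebra.lieSpan F L {0, y} ≤ K := by
    apply LieSubalgebra.lieSpan_le.mpr
    rintro a (rfl | rfl)
    · exact K.zero_mem
    · show a ∈ Submodule.span F {a}
      exact Submodule.mem_span_singleton_self a
  apply SSC.abelian_nilp
  intro a ha b hb
  have ha' : a ∈ Submodule.span F {y} := hle ha
  have hb' : b ∈ Submodule.span F {y} := hle hb
  rw [Submodule.mem_span_singleton] at ha' hb'
  obtain ⟨s, rfl⟩ := ha'
  obtain ⟨t, rfl⟩ := hb'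
  simp

/-- Key lemma: `nilIn F L x = U` for every nonzero `x ∈ U`. -/
lemma SSC.nilIn_eq (F : Type*) [Field F] (L : Type*) [LieRing L] [LieAlgebra F L]
    (U : LieSubalgebra F L)
    (hU : ∀ x ∈ U, x ≠ 0 → {y : L | ⁅x, y⁆ = 0} = (U : Set L))
    (x : L) (hx : x ∈ U) (hx0 : x ≠ 0) : nilIn F L x = (U : Set L) := by
  ext y
  constructor
  · intro hN
    change LieRing.IsNilpotent (LieSubalgebra.lieSpan F L {x, y}) at hN
    set N := LieSubalgebra.lieSpan F L {x, y} with hNdef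
    have hxN : x ∈ N := LieSubalgebra.subset_lieSpan (Set.mem_insert _ _)
    have hyN : y ∈ N := LieSubalgebra.subset_lieSpan (Set.mem_insert_of_mem _ rfl)
    have : Nontrivial N := ⟨⟨⟨x, hxN⟩, 0, fun h => hx0 (by simpa using congrArg Subtype.val h)⟩⟩
    have hcent : Nontrivial (LieAlgebra.center F N) :=
      by haveI := hN; exact LieAlgebra.non_trivial_center_of_isNilpotent
    obtain ⟨z, hz⟩ := exists_ne (0 : LieAlgebra.center F N)
    have hzmem : ∀ a : N, ⁅a, (z : N)⁆ = 0 :=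
      (LieModule.mem_maxTrivSubmodule F N N (z : N)).mp z.2
    have hz0 : ((z : N) : L) ≠ 0 := fun h => hz (Subtype.ext (Subtype.ext h))
    have hxz : ⁅x, ((z : N) : L)⁆ = 0 := by
      have := congrArg Subtype.val (hzmem ⟨x, hxN⟩)
      simpa using this
    have hzU : ((z : N) : L) ∈ U := by
      have h3 := hU x hx hx0
      show ((z : N) : L) ∈ (U : Set L)
      rw [← h3]; exact hxz
    have hyz : ⁅((z : N) : L), y⁆ = 0 := by
      have h2 := congrArg Subtype.val (hzmem ⟨y, hyN⟩)
      simp only [LieSubalgebra.coe_bracket, ZeroMemClass.coe_zero] at h2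
      rw [← lie_skew, h2, neg_zero]
    have h4 := hU _ hzU hz0
    show y ∈ (U : Set L)
    rw [← h4]; exact hyz
  · intro hy
    change LieRing.IsNilpotent (LieSubalgebra.lieSpan F L {x, y})
    have habU : ∀ a ∈ U, ∀ b ∈ U, ⁅a, b⁆ = (0:L) := by
      intro a ha b hb
      by_cases h0 : a = 0
      · simp [h0]
      · have := hU a ha h0
        have : b ∈ {w : L | ⁅a, w⁆ = 0} := by rw [this]; exact hb
        exact this
    have hle : LieSubalgebra.lieSpan F L {x, y} ≤ U := by
      apply LieSubalgebra.lieSpan_le.mpr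
      rintro a (rfl | rfl) <;> assumption
    exact SSC.abelian_nilp F L _ fun a ha b hb => habU a (hle ha) b (hle hb)

theorem strongly_self_centralizing_disconnected
    (F : Type*) [Field F] (L : Type*) [LieRing L] [LieAlgebra F L]
    [Module.Finite F L] (hL : ¬ LieRing.IsNilpotent L)
    (U : LieSubalgebra F L) (hUbot : U ≠ ⊥) (hUtop : U ≠ ⊤)
    (hU : ∀ x ∈ U, x ≠ 0 → {y : L | ⁅x, y⁆ = 0} = (U : Set L)) :
    (∀ x ∈ U, x ≠ 0 → nilIn F L x = (U : Set L)) ∧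
    (∀ (x : L) (hx : x ∈ U) (hx0 : x ≠ 0) (hx' : x ∉ nilSet F L)
        (y : L) (hy : y ∉ U) (hy' : y ∉ nilSet F L),
      ¬ (nilGraph F L).Adj ⟨x, hx'⟩ ⟨y, hy'⟩) ∧
    ¬ (nilGraph F L).Connected := by
  have key := SSC.nilIn_eq F L U hU
  -- non-adjacency
  have nadj : ∀ (x : L) (hx : x ∈ U) (hx0 : x ≠ 0) (hx' : x ∉ nilSet F L)
      (y : L) (hy : y ∉ U) (hy' : y ∉ nilSet F L),
      ¬ (nilGraph F L).Adj ⟨x, hx'⟩ ⟨y, hy'⟩ := by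
    intro x hx hx0 hx' y hy hy' hadj
    have : y ∈ nilIn F L x := hadj.2
    rw [key x hx hx0] at this
    exact hy this
  refine ⟨fun x hx hx0 => key x hx hx0, nadj, ?_⟩
  -- get a nonzero element of U
  have hex : ∃ x ∈ U, x ≠ 0 := by
    by_contra h
    push_neg at h
    apply hUbot
    ext w
    simp only [LieSubalgebra.mem_bot]
    exact ⟨fun hw => h w hw, fun hw => hw ▸ U.zero_mem⟩
  obtain ⟨x, hx, hx0⟩ := hex
  have hey : ∃ y : L, y ∉ U := by
    by_contra h
    push_neg at h
    exact hUtop (by ext w; simpa using h w)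
  obtain ⟨y, hy⟩ := hey
  -- x is not in nilSet
  have hx' : x ∉ nilSet F L := by
    intro hmem
    apply hy
    have : y ∈ nilIn F L x := hmem y
    rwa [key x hx hx0] at this
  -- y is not in nilSet
  have hy' : y ∉ nilSet F L := by
    intro hmem
    apply hy
    have h1 : LieRing.IsNilpotent (LieSubalgebra.lieSpan F L {y, x}) := hmem x
    rw [Set.pair_comm] at h1
    have h2 : y ∈ nilIn F L x := h1
    rwa [key x hx hx0] at h2
  intro hconn
  obtain ⟨p⟩ := hconn.preconnected ⟨x, hx'⟩ ⟨y, hy'⟩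
  suffices claim : ∀ (v w : {a : L // a ∉ nilSet F L}), (nilGraph F L).Walk v w →
      (v : L) ∈ U → (w : L) ∈ U by
    exact hy (claim _ _ p hx)
  intro v w p
  induction p with
  | nil => exact id
  | @cons a b c h q ih =>
    intro hv
    apply ih
    have hv0 : (a : L) ≠ 0 := fun h0 => a.2 (h0 ▸ SSC.zero_mem_nilSet F L)
    have hb : (b : L) ∈ nilIn F L (a : L) := h.2
    rwa [key _ hv hv0] at hb
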